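/- Sufficiency of the closed-form lower bound (general case): let g : [0,∞) → [0,1] be nondecreasing, let ℓ ≥ 0 and let h ∈ [0, ℓ] satisfy h·(1 − g(ℓ)) ≥ ∫_h^ℓ (1 − g(z)) dz. Then ∫_0^ℓ e^{−θ} g(θ) dθ + ∫_0^∞ e^{−θ} ( θ(1 − g(ℓ)) − ∫_{min{θ,ℓ}}^ℓ (1 − g(z)) dz )^+ dθ ≥ ∫_0^ℓ e^{−θ} g(θ) dθ − ∫_h^ℓ ( e^{−h} − e^{−z} )(1 − g(z)) dz + (1 + h) e^{−h} (1 − g(ℓ)). -/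

import Mathlib

open MeasureTheory Real

lemma exp_neg_hasDeriv (x : ℝ) : HasDerivAt (fun t => -Real.exp (-t)) (Real.exp (-x)) x := by
  exact (((Real.hasDerivAt_exp (-x)).comp x (hasDerivAt_neg x)).neg).congr_deriv (by ring)

lemma int_exp_Ioo (h z : ℝ) (hz : h ≤ z) :
    ∫ θ in Set.Ioo h z, Real.exp (-θ) = Real.exp (-h) - Real.exp (-z) := by
  rw [← integral_Ioc_eq_integral_Ioo, ← intervalIntegral.integral_of_le hz]
  have := intervalIntegral.integral_eq_sub_of_hasDerivAt (f := fun t => -Real.exp (-t))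
    (f' := fun t => Real.exp (-t)) (a := h) (b := z)
    (fun x _ => exp_neg_hasDeriv x)
    ((Real.continuous_exp.comp continuous_neg).intervalIntegrable h z)
  rw [this]; ring

lemma int_id_exp (h z : ℝ) :
    ∫ θ in h..z, θ * Real.exp (-θ) = (1 + h) * Real.exp (-h) - (1 + z) * Real.exp (-z) := by
  have key : ∀ x : ℝ, HasDerivAt (fun t => -(1 + t) * Real.exp (-t)) (x * Real.exp (-x)) x := by
    intro x
    have h1 : HasDerivAt (fun t : ℝ => -(1 + t)) (-1) x := by
      exact ((hasDerivAt_id x).const_add 1).neg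
    have := h1.mul ((Real.hasDerivAt_exp (-x)).comp x (hasDerivAt_neg x))
    exact this.congr_deriv (by rw [Function.comp_apply]; ring)
  have := intervalIntegral.integral_eq_sub_of_hasDerivAt (fun x _ => key x)
    ((continuous_id.mul (Real.continuous_exp.comp continuous_neg)).intervalIntegrable h z)
  rw [this]; ring

lemma fubini_aux (u : ℝ → ℝ) (hu : Measurable u) (hu0 : ∀ z, 0 ≤ u z) (hu1 : ∀ z, u z ≤ 1)
    (h ℓ : ℝ) (hh : 0 ≤ h) (hhl : h ≤ ℓ) :
    ∫ θ in Set.Ioc h ℓ, Real.exp (-θ) * ∫ z in Set.Ioc θ ℓ, u z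
      = ∫ z in Set.Ioc h ℓ, (Real.exp (-h) - Real.exp (-z)) * u z := by
  set f : ℝ → ℝ → ℝ := fun θ z => if θ < z then Real.exp (-θ) * u z else 0 with hf
  have hmeas : Measurable (Function.uncurry f) := by
    apply Measurable.ite (measurableSet_lt measurable_fst measurable_snd)
    · exact ((Real.measurable_exp.comp measurable_neg).comp measurable_fst).mul
        (hu.comp measurable_snd)
    · exact measurable_const
  have hint : Integrable (Function.uncurry f)
      ((volume.restrict (Set.Ioc h ℓ)).prod (volume.restrict (Set.Ioc h ℓ))) := by
    rw [Measure.prod_restrict]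
    apply Measure.integrableOn_of_bounded (M := 1)
    · rw [Measure.prod_prod]
      exact ENNReal.mul_ne_top measure_Ioc_lt_top.ne measure_Ioc_lt_top.ne
    · exact hmeas.aestronglyMeasurable
    · filter_upwards [ae_restrict_mem ((measurableSet_Ioc.prod measurableSet_Ioc))] with p hp
      rcases p with ⟨θ, z⟩
      simp only [Function.uncurry, f]
      split_ifs
      · rw [Real.norm_eq_abs, abs_of_nonneg (mul_nonneg (Real.exp_pos _).le (hu0 z))]
        calc Real.exp (-θ) * u z ≤ 1 * 1 := by
              apply mul_le_mul _ (hu1 z) (hu0 z) zero_le_one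
              exact Real.exp_le_one_iff.2 (neg_nonpos.2 (hh.trans hp.1.1.le))
          _ = 1 := one_mul 1
      · simp
  have step1 : ∀ θ ∈ Set.Ioc h ℓ,
      Real.exp (-θ) * ∫ z in Set.Ioc θ ℓ, u z = ∫ z in Set.Ioc h ℓ, f θ z := by
    intro θ hθ
    have : ∀ z, f θ z = Set.indicator (Set.Ioi θ) (fun z => Real.exp (-θ) * u z) z := by
      intro z; simp [f, Set.indicator_apply, Set.mem_Ioi]
    simp_rw [this]
    rw [setIntegral_indicator measurableSet_Ioi]
    have hset : Set.Ioc h ℓ ∩ Set.Ioi θ = Set.Ioc θ ℓ := by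
      ext x; simp only [Set.mem_Ioc, Set.mem_Ioi, Set.mem_inter_iff]
      constructor
      · rintro ⟨⟨_, hx2⟩, hx3⟩; exact ⟨hx3, hx2⟩
      · rintro ⟨hx1, hx2⟩; exact ⟨⟨hθ.1.trans hx1, hx2⟩, hx1⟩
    rw [hset, integral_const_mul]
  have step3 : ∀ z ∈ Set.Ioc h ℓ,
      (∫ θ in Set.Ioc h ℓ, f θ z) = (Real.exp (-h) - Real.exp (-z)) * u z := by
    intro z hz
    have : ∀ θ, f θ z = Set.indicator (Set.Iio z) (fun θ => Real.exp (-θ) * u z) θ := by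
      intro θ; simp [f, Set.indicator_apply, Set.mem_Iio]
    simp_rw [this]
    rw [setIntegral_indicator measurableSet_Iio]
    have hset : Set.Ioc h ℓ ∩ Set.Iio z = Set.Ioo h z := by
      ext x; simp only [Set.mem_Ioc, Set.mem_Iio, Set.mem_inter_iff, Set.mem_Ioo]
      constructor
      · rintro ⟨⟨hx1, _⟩, hx3⟩; exact ⟨hx1, hx3⟩
      · rintro ⟨hx1, hx2⟩; exact ⟨⟨hx1, hx2.le.trans hz.2⟩, hx2⟩
    rw [hset, integral_mul_const, int_exp_Ioo h z (hz.1.le)]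
  calc ∫ θ in Set.Ioc h ℓ, Real.exp (-θ) * ∫ z in Set.Ioc θ ℓ, u z
      = ∫ θ in Set.Ioc h ℓ, ∫ z in Set.Ioc h ℓ, f θ z :=
        setIntegral_congr_fun measurableSet_Ioc step1
    _ = ∫ z in Set.Ioc h ℓ, ∫ θ in Set.Ioc h ℓ, f θ z := integral_integral_swap hint
    _ = ∫ z in Set.Ioc h ℓ, (Real.exp (-h) - Real.exp (-z)) * u z :=
        setIntegral_congr_fun measurableSet_Ioc step3

lemma tendsto_aux : Filter.Tendsto (fun t : ℝ => -(1 + t) * Real.exp (-t)) Filter.atTop (nhds 0) := by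
  have h1 := tendsto_pow_mul_exp_neg_atTop_nhds_zero 1
  have h0 := tendsto_pow_mul_exp_neg_atTop_nhds_zero 0
  have := (h0.add h1).neg
  simp only [pow_zero, pow_one, one_mul, neg_zero, add_zero] at this
  convert this using 2 with t
  ring

lemma int_Ioi_id_exp (a : ℝ) (ha : 0 ≤ a) :
    ∫ θ in Set.Ioi a, θ * Real.exp (-θ) = (1 + a) * Real.exp (-a) := by
  have key : ∀ x : ℝ, HasDerivAt (fun t : ℝ => -(1 + t) * Real.exp (-t)) (x * Real.exp (-x)) x := by
    intro x
    have h1 : HasDerivAt (fun t : ℝ => -(1 + t)) (-1) x := by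
      exact ((hasDerivAt_id x).const_add 1).neg
    have := h1.mul ((Real.hasDerivAt_exp (-x)).comp x (hasDerivAt_neg x))
    exact this.congr_deriv (by rw [Function.comp_apply]; ring)
  have := integral_Ioi_of_hasDerivAt_of_nonneg' (fun x _ => key x)
    (fun x hx => mul_nonneg (ha.trans hx.out.le) (Real.exp_pos _).le) tendsto_aux
  rw [this]; ring

lemma integrableOn_id_exp (a : ℝ) (ha : 0 ≤ a) :
    IntegrableOn (fun θ => θ * Real.exp (-θ)) (Set.Ioi a) := by
  have key : ∀ x : ℝ, HasDerivAt (fun t : ℝ => -(1 + t) * Real.exp (-t)) (x * Real.exp (-x)) x := by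
    intro x
    have h1 : HasDerivAt (fun t : ℝ => -(1 + t)) (-1) x := by
      exact ((hasDerivAt_id x).const_add 1).neg
    have := h1.mul ((Real.hasDerivAt_exp (-x)).comp x (hasDerivAt_neg x))
    exact this.congr_deriv (by rw [Function.comp_apply]; ring)
  exact integrableOn_Ioi_deriv_of_nonneg' (fun x _ => key x)
    (fun x hx => mul_nonneg (ha.trans hx.out.le) (Real.exp_pos _).le) tendsto_aux

/-- Sufficiency of the closed-form lower bound in the general-probability
analysis of Stochastic Balance. -/
theorem closed_form_lower_bound_general
    (g : ℝ → ℝ) (hg : MonotoneOn g (Set.Ici 0))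
    (hrange : ∀ x ∈ Set.Ici (0 : ℝ), g x ∈ Set.Icc (0 : ℝ) 1)
    (ℓ h : ℝ) (hℓ : 0 ≤ ℓ) (hh : h ∈ Set.Icc (0 : ℝ) ℓ)
    (hkey : h * (1 - g ℓ) ≥ ∫ z in h..ℓ, (1 - g z)) :
    (∫ θ in (0 : ℝ)..ℓ, Real.exp (-θ) * g θ)
        + (∫ θ in Set.Ioi (0 : ℝ), Real.exp (-θ) *
            max (θ * (1 - g ℓ) - ∫ z in min θ ℓ..ℓ, (1 - g z)) 0)
      ≥ (∫ θ in (0 : ℝ)..ℓ, Real.exp (-θ) * g θ)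
          - (∫ z in h..ℓ, (Real.exp (-h) - Real.exp (-z)) * (1 - g z))
          + (1 + h) * Real.exp (-h) * (1 - g ℓ) := by
  obtain ⟨hh0, hhl⟩ := hh
  clear hkey
  -- the monotone extension of g and the corresponding "1 - g"
  set g' : ℝ → ℝ := fun x => g (max x 0) with hg'def
  have hg'mono : Monotone g' := fun x y hxy =>
    hg (Set.mem_Ici.2 (le_max_right x 0)) (Set.mem_Ici.2 (le_max_right y 0))
      (max_le_max hxy le_rfl)
  have hg'meas : Measurable g' := hg'mono.measurable
  have hg'eq : ∀ x, 0 ≤ x → g' x = g x := fun x hx => by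
    simp [hg'def, max_eq_left hx]
  set u : ℝ → ℝ := fun z => 1 - g' z with hudef
  have humeas : Measurable u := measurable_const.sub hg'meas
  have hu0 : ∀ z, 0 ≤ u z := fun z => by
    have := (hrange (max z 0) (Set.mem_Ici.2 (le_max_right z 0))).2
    simp [hudef, hg'def]; linarith
  have hu1 : ∀ z, u z ≤ 1 := fun z => by
    have := (hrange (max z 0) (Set.mem_Ici.2 (le_max_right z 0))).1
    simp [hudef, hg'def]; linarith
  set c : ℝ := 1 - g ℓ with hcdef
  have hc0 : 0 ≤ c := by
    have := (hrange ℓ (Set.mem_Ici.2 hℓ)).2; simp [hcdef]; linarith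
  have hc1 : c ≤ 1 := by
    have := (hrange ℓ (Set.mem_Ici.2 hℓ)).1; simp [hcdef]; linarith
  -- interval integrability of u
  have huii : ∀ a b : ℝ, IntervalIntegrable u volume a b := by
    intro a b
    rw [intervalIntegrable_iff]
    apply Measure.integrableOn_of_bounded (M := 1) measure_Ioc_lt_top.ne
      humeas.aestronglyMeasurable
    filter_upwards with z
    rw [Real.norm_eq_abs, abs_of_nonneg (hu0 z)]
    exact hu1 z
  -- the primitive G
  set G : ℝ → ℝ := fun t => ∫ z in t..ℓ, u z with hGdef
  have hGcont : Continuous G := by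
    have := (intervalIntegral.continuous_primitive huii ℓ).neg
    convert this using 1
    funext t
    simp [hGdef, intervalIntegral.integral_symm ℓ t]
  have hGbound : ∀ t, 0 ≤ t → t ≤ ℓ → |G t| ≤ ℓ := by
    intro t ht0 htl
    have := intervalIntegral.norm_integral_le_of_norm_le_const (C := 1) (a := t) (b := ℓ)
      (f := u) (fun x _ => by rw [Real.norm_eq_abs, abs_of_nonneg (hu0 x)]; exact hu1 x)
    rw [Real.norm_eq_abs] at this
    calc |G t| ≤ 1 * |ℓ - t| := this
      _ = ℓ - t := by rw [one_mul, abs_of_nonneg (by linarith)]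
      _ ≤ ℓ := by linarith
  have hGl : G ℓ = 0 := intervalIntegral.integral_same
  -- F
  set F : ℝ → ℝ := fun θ => θ * c - G (min θ ℓ) with hFdef
  have hFcont : Continuous F :=
    ((continuous_id.mul continuous_const).sub
      (hGcont.comp (continuous_id.min continuous_const)))
  have hexpF : Continuous fun θ => Real.exp (-θ) * F θ :=
    (Real.continuous_exp.comp continuous_neg).mul hFcont
  have hexpmax : Continuous fun θ => Real.exp (-θ) * max (F θ) 0 :=
    (Real.continuous_exp.comp continuous_neg).mul (hFcont.max continuous_const)
  -- dominating function
  have hdom : IntegrableOn (fun θ => θ * Real.exp (-θ) + ℓ * Real.exp (-θ)) (Set.Ioi 0) := by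
    apply (integrableOn_id_exp 0 le_rfl).add
    have := (exp_neg_integrableOn_Ioi 0 one_pos).const_mul ℓ
    simpa [IntegrableOn] using this
  have hFbound : ∀ θ : ℝ, 0 < θ → |F θ| ≤ θ + ℓ := by
    intro θ hθ
    have h1 : |θ * c| ≤ θ := by
      rw [abs_of_nonneg (mul_nonneg hθ.le hc0)]
      nlinarith
    have h2 : |G (min θ ℓ)| ≤ ℓ :=
      hGbound _ (le_min hθ.le hℓ) (min_le_right _ _)
    calc |F θ| ≤ |θ * c| + |G (min θ ℓ)| := abs_sub _ _
      _ ≤ θ + ℓ := add_le_add h1 h2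
  -- integrability of the max integrand on Ioi 0
  have hmax_int : IntegrableOn (fun θ => Real.exp (-θ) * max (F θ) 0) (Set.Ioi 0) := by
    apply Integrable.mono' hdom hexpmax.aestronglyMeasurable.restrict
    filter_upwards [ae_restrict_mem measurableSet_Ioi] with θ hθ
    rw [Real.norm_eq_abs, abs_mul, abs_of_nonneg (Real.exp_pos _).le]
    have : |max (F θ) 0| ≤ |F θ| := by
      rcases le_or_gt (F θ) 0 with h' | h'
      · rw [max_eq_right h']; simp [abs_nonneg]
      · rw [max_eq_left h'.le]
    calc Real.exp (-θ) * |max (F θ) 0| ≤ Real.exp (-θ) * (θ + ℓ) :=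
          mul_le_mul_of_nonneg_left (this.trans (hFbound θ hθ)) (Real.exp_pos _).le
      _ = θ * Real.exp (-θ) + ℓ * Real.exp (-θ) := by ring
  have hF_int : IntegrableOn (fun θ => Real.exp (-θ) * F θ) (Set.Ioi h) := by
    apply Integrable.mono' (hdom.mono_set (Set.Ioi_subset_Ioi hh0))
      hexpF.aestronglyMeasurable.restrict
    filter_upwards [ae_restrict_mem measurableSet_Ioi] with θ hθ
    have hθ0 : 0 < θ := lt_of_le_of_lt hh0 hθ
    rw [Real.norm_eq_abs, abs_mul, abs_of_nonneg (Real.exp_pos _).le]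
    calc Real.exp (-θ) * |F θ| ≤ Real.exp (-θ) * (θ + ℓ) :=
          mul_le_mul_of_nonneg_left (hFbound θ hθ0) (Real.exp_pos _).le
      _ = θ * Real.exp (-θ) + ℓ * Real.exp (-θ) := by ring
  -- step 0: rewrite the statement's Ioi-integral as the F-integral
  have hrw0 : (∫ θ in Set.Ioi (0 : ℝ), Real.exp (-θ) *
      max (θ * (1 - g ℓ) - ∫ z in min θ ℓ..ℓ, (1 - g z)) 0)
      = ∫ θ in Set.Ioi (0 : ℝ), Real.exp (-θ) * max (F θ) 0 := by
    apply setIntegral_congr_fun measurableSet_Ioi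
    intro θ hθ
    have hmin0 : 0 ≤ min θ ℓ := le_min (le_of_lt hθ) hℓ
    have : (∫ z in min θ ℓ..ℓ, (1 - g z)) = G (min θ ℓ) := by
      apply intervalIntegral.integral_congr
      intro z hz
      rw [Set.uIcc_of_le (min_le_right θ ℓ)] at hz
      have hz0 : 0 ≤ z := hmin0.trans hz.1
      simp [hudef, hg'eq z hz0]
    dsimp only
    rw [this]
  -- step 1: restrict to Ioi h
  have hstep1 : (∫ θ in Set.Ioi (0 : ℝ), Real.exp (-θ) * max (F θ) 0)
      ≥ ∫ θ in Set.Ioi h, Real.exp (-θ) * max (F θ) 0 := by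
    apply setIntegral_mono_set hmax_int
    · filter_upwards with θ
      exact mul_nonneg (Real.exp_pos _).le (le_max_right _ _)
    · exact HasSubset.Subset.eventuallyLE (Set.Ioi_subset_Ioi hh0)
  -- step 2: drop the max
  have hstep2 : (∫ θ in Set.Ioi h, Real.exp (-θ) * max (F θ) 0)
      ≥ ∫ θ in Set.Ioi h, Real.exp (-θ) * F θ := by
    apply setIntegral_mono_on hF_int
      (hmax_int.mono_set (Set.Ioi_subset_Ioi hh0)) measurableSet_Ioi
    intro θ _
    exact mul_le_mul_of_nonneg_left (le_max_left _ _) (Real.exp_pos _).le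
  -- step 3: split and compute
  have hsplit : (∫ θ in Set.Ioi h, Real.exp (-θ) * F θ)
      = (∫ θ in Set.Ioc h ℓ, Real.exp (-θ) * F θ) + ∫ θ in Set.Ioi ℓ, Real.exp (-θ) * F θ := by
    rw [← setIntegral_union (Set.Ioc_disjoint_Ioi le_rfl) measurableSet_Ioi
      (hF_int.mono_set Set.Ioc_subset_Ioi_self)
      (hF_int.mono_set (Set.Ioi_subset_Ioi hhl)), Set.Ioc_union_Ioi_eq_Ioi hhl]
  have htail : (∫ θ in Set.Ioi ℓ, Real.exp (-θ) * F θ) = c * ((1 + ℓ) * Real.exp (-ℓ)) := by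
    have : ∀ θ ∈ Set.Ioi ℓ, Real.exp (-θ) * F θ = (θ * Real.exp (-θ)) * c := by
      intro θ hθ
      have : min θ ℓ = ℓ := min_eq_right (le_of_lt hθ)
      simp [hFdef, this, hGl]; ring
    rw [setIntegral_congr_fun measurableSet_Ioi this, integral_mul_const,
      int_Ioi_id_exp ℓ hℓ]
    ring
  have hmid : (∫ θ in Set.Ioc h ℓ, Real.exp (-θ) * F θ)
      = c * ((1 + h) * Real.exp (-h) - (1 + ℓ) * Real.exp (-ℓ))
        - ∫ z in h..ℓ, (Real.exp (-h) - Real.exp (-z)) * u z := by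
    have hint1 : IntegrableOn (fun θ => Real.exp (-θ) * (θ * c)) (Set.Ioc h ℓ) :=
      (((Real.continuous_exp.comp continuous_neg).mul
        (continuous_id.mul continuous_const))).integrableOn_Ioc
    have hint2 : IntegrableOn (fun θ => Real.exp (-θ) * G θ) (Set.Ioc h ℓ) :=
      ((Real.continuous_exp.comp continuous_neg).mul hGcont).integrableOn_Ioc
    have hcong : ∀ θ ∈ Set.Ioc h ℓ,
        Real.exp (-θ) * F θ = Real.exp (-θ) * (θ * c) - Real.exp (-θ) * G θ := by
      intro θ hθ
      have : min θ ℓ = θ := min_eq_left hθ.2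
      simp [hFdef, this]; ring
    rw [setIntegral_congr_fun measurableSet_Ioc hcong, integral_sub hint1 hint2]
    have e1 : (∫ θ in Set.Ioc h ℓ, Real.exp (-θ) * (θ * c))
        = c * ((1 + h) * Real.exp (-h) - (1 + ℓ) * Real.exp (-ℓ)) := by
      have : ∀ θ ∈ Set.Ioc h ℓ, Real.exp (-θ) * (θ * c) = (θ * Real.exp (-θ)) * c := by
        intro θ _; ring
      rw [setIntegral_congr_fun measurableSet_Ioc this, integral_mul_const,
        ← intervalIntegral.integral_of_le hhl, int_id_exp]
      ring
    have e2 : (∫ θ in Set.Ioc h ℓ, Real.exp (-θ) * G θ)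
        = ∫ z in h..ℓ, (Real.exp (-h) - Real.exp (-z)) * u z := by
      have hcong2 : ∀ θ ∈ Set.Ioc h ℓ,
          Real.exp (-θ) * G θ = Real.exp (-θ) * ∫ z in Set.Ioc θ ℓ, u z := by
        intro θ hθ
        rw [hGdef]
        simp only
        rw [intervalIntegral.integral_of_le hθ.2]
      rw [setIntegral_congr_fun measurableSet_Ioc hcong2,
        fubini_aux u humeas hu0 hu1 h ℓ hh0 hhl, intervalIntegral.integral_of_le hhl]
    rw [e1, e2]
  -- rewrite the RHS's u-integral
  have hrwRHS : (∫ z in h..ℓ, (Real.exp (-h) - Real.exp (-z)) * (1 - g z))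
      = ∫ z in h..ℓ, (Real.exp (-h) - Real.exp (-z)) * u z := by
    apply intervalIntegral.integral_congr
    intro z hz
    rw [Set.uIcc_of_le hhl] at hz
    have hz0 : 0 ≤ z := hh0.trans hz.1
    simp [hudef, hg'eq z hz0]
  rw [hrw0, hrwRHS]
  have := hstep1
  have := hstep2
  have total : (∫ θ in Set.Ioi h, Real.exp (-θ) * F θ)
      = c * ((1 + h) * Real.exp (-h))
        - ∫ z in h..ℓ, (Real.exp (-h) - Real.exp (-z)) * u z := by
    rw [hsplit, hmid, htail]; ring
  have hfin : (1 + h) * Real.exp (-h) * (1 - g ℓ) = c * ((1 + h) * Real.exp (-h)) := by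
    rw [hcdef]; ring
  linarith [hstep1, hstep2]
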